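/- Let S be a semicopula. If for all measurable spaces (X,𝒜), all capacities μ, all measurable f : X → [0,1], and all a ∈ [0,1] the identity I_S(μ, S(a,f)) = S(a, I_S(μ,f)) holds, then for each a ∈ (0,1) the map x ↦ S(a,x) is right-continuous on [0,1]. -/

import Mathlib

open unitInterval Set Filter Topology

instance : Fact ((0:ℝ) ≤ 1) := ⟨zero_le_one⟩

/-- A semicopula: nondecreasing in each coordinate, neutral element 1. -/
def IsSemicopula (S : I → I → I) : Prop :=
  (∀ x, S x 1 = x) ∧ (∀ x, S 1 x = x) ∧
  (∀ y, Monotone fun x => S x y) ∧ (∀ x, Monotone fun y => S x y)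

/-- A capacity: monotone set function with value 0 at ∅ and 1 at univ. -/
def IsCapacity {X : Type} [MeasurableSpace X] (μ : Set X → I) : Prop :=
  (∀ A B : Set X, MeasurableSet A → MeasurableSet B → A ⊆ B → μ A ≤ μ B) ∧
  μ (∅ : Set X) = 0 ∧ μ (univ : Set X) = 1

/-- The generalized Sugeno (seminormed fuzzy) integral. -/
noncomputable def sugeno {X : Type} [MeasurableSpace X] (S : I → I → I)
    (μ : Set X → I) (f : X → I) : I :=
  ⨆ t : I, S t (μ {x | t ≤ f x})

theorem prop_implies_rightCont (S : I → I → I) (hS : IsSemicopula S)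
    (hprop : ∀ (X : Type) [MeasurableSpace X] (μ : Set X → I) (f : X → I),
      IsCapacity μ → Measurable f → ∀ a : I,
        sugeno S μ (fun x => S a (f x)) = S a (sugeno S μ f)) :
    ∀ a : I, 0 < a → a < 1 → ∀ x : I, ContinuousWithinAt (fun y => S a y) (Ici x) x := by
  classical
  obtain ⟨hS1r, hS1l, hSml, hSmr⟩ := hS
  have hle1 : ∀ z : I, z ≤ 1 := fun z => z.2.2
  intro a _ _ x
  rcases eq_or_lt_of_le x.2.2 with hx1 | hx1
  · -- x = 1 : Ici x = {x}
    have hx : x = 1 := Subtype.ext hx1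
    subst hx
    have : Ici (1:I) = {1} := by
      ext y
      simp only [mem_Ici, mem_singleton_iff]
      exact ⟨fun h => le_antisymm (hle1 y) h, fun h => h.ge⟩
    rw [this]
    exact continuousWithinAt_singleton
  · -- x < 1
    have hx1' : x < 1 := by exact_mod_cast Subtype.coe_lt_coe.mp hx1
    rw [← continuousWithinAt_Ioi_iff_Ici]
    have hmono : Monotone (fun y => S a y) := hSmr a
    have htend := hmono.tendsto_nhdsGT x
    have key : sInf ((fun y => S a y) '' Ioi x) = S a x := by
      refine le_antisymm ?_ ?_
      swap
      · exact le_csInf (Set.Nonempty.image _ ⟨1, hx1'⟩) (by rintro _ ⟨y, hy, rfl⟩; exact hmono hy.le)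
      -- main direction: use hprop with a specific space / capacity / function
      set L := sInf ((fun y => S a y) '' Ioi x) with hL
      letI : MeasurableSpace ℕ := ⊤
      set μ : Set ℕ → I := fun A => if A.Finite then 0 else 1 with hμ
      have hcap : IsCapacity μ := by
        refine ⟨fun A B _ _ hAB => ?_, by simp [hμ], by simp only [hμ]; rw [if_neg]; exact Set.infinite_univ⟩
        by_cases hB : B.Finite
        · simp [hμ, hB, hB.subset hAB]
        · calc μ A ≤ 1 := hle1 _
            _ = μ B := by simp [hμ, hB]
      -- the function f n = x + (1-x)/(n+1)
      have hxpos : (0:ℝ) < 1 - x := by linarith [show (x:ℝ) < 1 from hx1]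
      have hfmem : ∀ n : ℕ, (x:ℝ) + (1 - x)/(n+1) ∈ Set.Icc (0:ℝ) 1 := by
        intro n
        have h1 : (0:ℝ) < (n:ℝ) + 1 := by positivity
        constructor
        · have := x.2.1; nlinarith [div_nonneg hxpos.le h1.le]
        · have : (1 - (x:ℝ))/(n+1) ≤ 1 - x := by
            rw [div_le_iff₀ h1]; nlinarith
          linarith
      set f : ℕ → I := fun n => ⟨(x:ℝ) + (1 - x)/(n+1), hfmem n⟩ with hf
      have hfgt : ∀ n, x < f n := by
        intro n
        rw [← Subtype.coe_lt_coe]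
        have h1 : (0:ℝ) < (n:ℝ) + 1 := by positivity
        simp only [hf]
        have := div_pos hxpos h1
        linarith
      have hmeas : Measurable f := fun _ _ => trivial
      -- sugeno S μ f = x
      have hsug : sugeno S μ f = x := by
        refine le_antisymm (iSup_le fun t => ?_) ?_
        · by_cases ht : t ≤ x
          · calc S t (μ {n | t ≤ f n}) ≤ S t 1 := hSmr t le_top
              _ = t := hS1r t
              _ ≤ x := ht
          · push_neg at ht
            have hfin : {n : ℕ | t ≤ f n}.Finite := by
              have htx : (0:ℝ) < (t:ℝ) - x := by
                have := Subtype.coe_lt_coe.mpr ht; linarith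
              obtain ⟨N, hN⟩ := exists_nat_gt ((1 - (x:ℝ))/((t:ℝ) - x))
              apply Set.Finite.subset (Set.finite_Iio N)
              intro n hn
              simp only [mem_setOf_eq] at hn
              by_contra hcon
              simp only [mem_Iio, not_lt] at hcon
              have h1 : (0:ℝ) < (n:ℝ) + 1 := by positivity
              have hle : (t:ℝ) ≤ x + (1 - x)/(n+1) := Subtype.coe_le_coe.mpr hn
              have : (1 - (x:ℝ))/((t:ℝ) - x) < n + 1 := by
                calc (1 - (x:ℝ))/((t:ℝ) - x) < N := hN
                  _ ≤ n := by exact_mod_cast hcon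
                  _ < n + 1 := by linarith
              have := (div_lt_iff₀ htx).mp this
              have h2 : (1 - (x:ℝ))/(n+1) < t - x := by
                rw [div_lt_iff₀ h1]; linarith
              linarith
            have hμ0 : μ {n : ℕ | t ≤ f n} = 0 := by simp [hμ, hfin]
            calc S t (μ {n | t ≤ f n}) = S t 0 := by rw [hμ0]
              _ ≤ S 1 0 := hSml 0 le_top
              _ = 0 := hS1l 0
              _ ≤ x := x.2.1
        · have huniv : {n : ℕ | x ≤ f n} = univ := by
            ext n; simp [(hfgt n).le]
          have : S x (μ {n | x ≤ f n}) = x := by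
            rw [huniv]
            have : μ univ = 1 := hcap.2.2
            rw [this, hS1r]
          calc x = S x (μ {n | x ≤ f n}) := this.symm
            _ ≤ ⨆ t, S t (μ {n | t ≤ f n}) :=
              le_iSup (fun t : I => S t (μ {n : ℕ | t ≤ f n})) x
      -- L ≤ sugeno S μ (S a ∘ f) = S a x
      have hid := hprop ℕ μ f hcap hmeas a
      rw [hsug] at hid
      have hLle : ∀ n, L ≤ S a (f n) :=
        fun n => csInf_le (OrderBot.bddBelow _) ⟨f n, hfgt n, rfl⟩
      have huniv : {n : ℕ | L ≤ S a (f n)} = univ := by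
        ext n; simp [hLle n]
      calc L = S L (μ {n | L ≤ (fun m => S a (f m)) n}) := by
            simp only [huniv]
            rw [show {n : ℕ | L ≤ S a (f n)} = univ from huniv] at *
            rw [hcap.2.2, hS1r]
        _ ≤ sugeno S μ (fun n => S a (f n)) :=
              le_iSup (fun t : I => S t (μ {n : ℕ | t ≤ (fun m => S a (f m)) n})) L
        _ = S a x := hid
    have : Tendsto (fun y => S a y) (𝓝[>] x) (𝓝 (S a x)) := key ▸ htend
    exact this
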